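/- (Oracle-model bound on the drift caused by oracle calls.) Let M, N, T be positive integers and k : Fin T → ℕ. Let ψ₀ be a unit vector in EuclideanSpace ℂ (Fin M), let U_1, …, U_T be unitary operators on EuclideanSpace ℂ (Fin M), and for each x ∈ Fin N and t ∈ Fin T let S_{x,t} ⊆ Fin M be such that every z ∈ Fin M belongs to S_{x,t} for at most k_t values of x. Let P_{x,t} be the sign-flip operator of S_{x,t}. Define the oracle-free state ψ_free = U_T ⋯ U_1 ψ₀ and, for each x, the oracle state ψ_x = U_T P_{x,T} ⋯ U_1 P_{x,1} ψ₀. Then ∑_{x ∈ Fin N} (1 − |⟨ψ_free, ψ_x⟩|²) ≤ 4 (∑_{t=1}^{T} √(k_t))². -/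

import Mathlib

def ocChain {α : Type*} (f : ℕ → α → α) (v : α) : ℕ → α
  | 0 => v
  | n+1 => f n (ocChain f v n)

lemma ocChain_shift {α : Type*} (f : ℕ → α → α) (v : α) (n : ℕ) :
    ocChain f v (n+1) = ocChain (fun t => f (t+1)) (f 0 v) n := by
  induction n with
  | zero => simp [ocChain]
  | succ n ih => rw [ocChain, ih]; rfl

lemma ocChain_foldl {α : Type*} (n : ℕ) (f : ℕ → α → α) (v : α) :
    (List.ofFn fun i : Fin n => f i).foldl (fun v g => g v) v = ocChain f v n := by
  induction n generalizing f v with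
  | zero => simp [ocChain]
  | succ n ih =>
    rw [List.ofFn_succ, List.foldl_cons, ocChain_shift]
    simpa [Fin.val_succ] using ih (fun t => f (t+1)) (f 0 v)

lemma ocChain_norm {E : Type*} [NormedAddCommGroup E] (f : ℕ → E → E)
    (hf : ∀ t a, ‖f t a‖ = ‖a‖) (v : E) (n : ℕ) : ‖ocChain f v n‖ = ‖v‖ := by
  induction n with
  | zero => rfl
  | succ n ih => rw [ocChain, hf, ih]

lemma ocChain_hybrid {E : Type*} [NormedAddCommGroup E] (f g : ℕ → E → E)
    (hg : ∀ t a b, ‖g t a - g t b‖ ≤ ‖a - b‖) (v : E) (n : ℕ) :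
    ‖ocChain g v n - ocChain f v n‖ ≤
      ∑ t ∈ Finset.range n, ‖g t (ocChain f v t) - f t (ocChain f v t)‖ := by
  induction n with
  | zero => simp [ocChain]
  | succ n ih =>
    rw [Finset.sum_range_succ]
    calc ‖ocChain g v (n+1) - ocChain f v (n+1)‖
        ≤ ‖g n (ocChain g v n) - g n (ocChain f v n)‖ +
          ‖g n (ocChain f v n) - f n (ocChain f v n)‖ := by
          rw [ocChain, ocChain]; exact norm_sub_le_norm_sub_add_norm_sub _ _ _
      _ ≤ ‖ocChain g v n - ocChain f v n‖ +
          ‖g n (ocChain f v n) - f n (ocChain f v n)‖ := by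
          gcongr; exact hg n _ _
      _ ≤ _ := by gcongr

lemma signflip_norm {M : ℕ} (Sf : Finset (Fin M)) (Pφ φ : EuclideanSpace ℂ (Fin M))
    (h : ∀ z, Pφ z = if z ∈ Sf then -φ z else φ z) :
    ‖Pφ‖ = ‖φ‖ := by
  rw [EuclideanSpace.norm_eq, EuclideanSpace.norm_eq]
  congr 1
  refine Finset.sum_congr rfl fun z _ => ?_
  rw [h]; split <;> simp

lemma signflip_sub_norm {M : ℕ} (Sf : Finset (Fin M)) (Pφ φ : EuclideanSpace ℂ (Fin M))
    (h : ∀ z, Pφ z = if z ∈ Sf then -φ z else φ z) :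
    ‖Pφ - φ‖ = 2 * Real.sqrt (∑ z ∈ Sf, ‖φ z‖^2) := by
  rw [EuclideanSpace.norm_eq]
  have hz : ∀ z, ‖(Pφ - φ) z‖^2 = if z ∈ Sf then 4 * ‖φ z‖^2 else 0 := by
    intro z
    have : (Pφ - φ) z = Pφ z - φ z := rfl
    rw [this, h]
    split
    · rw [show -φ z - φ z = -(2 * φ z) by ring, norm_neg]
      simp [norm_mul]; ring
    · simp
  rw [Finset.sum_congr rfl fun z _ => hz z]
  rw [Finset.sum_ite_mem, Finset.univ_inter, ← Finset.mul_sum]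
  rw [show (4:ℝ) = 2^2 by norm_num, Real.sqrt_mul (by positivity),
    Real.sqrt_sq (by norm_num)]

set_option maxHeartbeats 1000000 in
theorem oracleDriftBound (M N T : ℕ) (hM : 0 < M) (hN : 0 < N) (hT : 0 < T)
    (k : Fin T → ℕ)
    (ψ₀ : EuclideanSpace ℂ (Fin M)) (hψ₀ : ‖ψ₀‖ = 1)
    (U : Fin T → (EuclideanSpace ℂ (Fin M) ≃ₗᵢ[ℂ] EuclideanSpace ℂ (Fin M)))
    (S : Fin N → Fin T → Finset (Fin M))
    (hk : ∀ (t : Fin T) (z : Fin M),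
      (Finset.univ.filter fun x : Fin N => z ∈ S x t).card ≤ k t)
    (P : Fin N → Fin T → (EuclideanSpace ℂ (Fin M) →ₗ[ℂ] EuclideanSpace ℂ (Fin M)))
    (hP : ∀ (x : Fin N) (t : Fin T) (φ : EuclideanSpace ℂ (Fin M)) (z : Fin M),
      P x t φ z = if z ∈ S x t then -φ z else φ z)
    (ψfree : EuclideanSpace ℂ (Fin M))
    (hfree : ψfree = (List.ofFn fun t : Fin T =>
        fun v : EuclideanSpace ℂ (Fin M) => U t v).foldl (fun v f => f v) ψ₀)
    (ψ : Fin N → EuclideanSpace ℂ (Fin M))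
    (hψ : ∀ x, ψ x = (List.ofFn fun t : Fin T =>
        fun v : EuclideanSpace ℂ (Fin M) => U t (P x t v)).foldl (fun v f => f v) ψ₀) :
    ∑ x : Fin N, (1 - ‖(inner ℂ ψfree (ψ x) : ℂ)‖ ^ 2) ≤
      4 * (∑ t : Fin T, Real.sqrt (k t)) ^ 2 := by
  have E := EuclideanSpace ℂ (Fin M)
  clear E
  -- free and oracle step maps, extended to ℕ
  set f : ℕ → EuclideanSpace ℂ (Fin M) → EuclideanSpace ℂ (Fin M) := fun t v => if h : t < T then U ⟨t, h⟩ v else v with hf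
  set g : Fin N → ℕ → EuclideanSpace ℂ (Fin M) → EuclideanSpace ℂ (Fin M) :=
    fun x t v => if h : t < T then U ⟨t, h⟩ (P x ⟨t, h⟩ v) else v with hg
  have hfree' : ψfree = ocChain f ψ₀ T := by
    rw [hfree, ← ocChain_foldl]
    congr 1
    refine congrArg List.ofFn (funext fun i => funext fun v => ?_)
    simp [hf, i.isLt]
  have hψ' : ∀ x, ψ x = ocChain (g x) ψ₀ T := by
    intro x
    rw [hψ, ← ocChain_foldl]
    congr 1
    refine congrArg List.ofFn (funext fun i => funext fun v => ?_)
    simp [hg, i.isLt]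
  -- norm preservation
  have hPnorm : ∀ (x : Fin N) (t : Fin T) (φ : EuclideanSpace ℂ (Fin M)), ‖P x t φ‖ = ‖φ‖ := fun x t φ =>
    signflip_norm (S x t) _ φ (hP x t φ)
  have hfnorm : ∀ t a, ‖f t a‖ = ‖a‖ := by
    intro t a
    simp only [hf]
    split
    · exact (U _).norm_map a
    · rfl
  have hgnorm : ∀ x t a, ‖g x t a‖ = ‖a‖ := by
    intro x t a
    simp only [hg]
    split
    · rw [(U _).norm_map, hPnorm]
    · rfl
  have hglip : ∀ x t a b, ‖g x t a - g x t b‖ ≤ ‖a - b‖ := by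
    intro x t a b
    simp only [hg]
    split
    · rw [← map_sub, ← map_sub, (U _).norm_map, hPnorm]
    · exact le_rfl
  -- free intermediate states
  set φ : ℕ → EuclideanSpace ℂ (Fin M) := fun t => ocChain f ψ₀ t with hφ
  have hφnorm : ∀ t, ‖φ t‖ = 1 := fun t => by rw [hφ, ocChain_norm f hfnorm, hψ₀]
  -- query magnitudes
  set α : Fin N → Fin T → ℝ := fun x t => ∑ z ∈ S x t, ‖φ t z‖^2 with hα
  have hα0 : ∀ x t, 0 ≤ α x t := fun x t => Finset.sum_nonneg fun z _ => sq_nonneg _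
  set β : Fin N → ℝ := fun x => ∑ t : Fin T, 2 * Real.sqrt (α x t) with hβ
  -- error bound per step
  have herr : ∀ (x : Fin N) (t : Fin T),
      ‖g x t (φ t) - f t (φ t)‖ = 2 * Real.sqrt (α x t) := by
    intro x t
    simp only [hf, hg, t.isLt, dif_pos, Fin.eta]
    rw [← map_sub, (U t).norm_map]
    exact signflip_sub_norm (S x t) (P x t (φ t)) (φ t) (hP x t (φ t))
  -- hybrid argument
  have hdiff : ∀ x, ‖ψ x - ψfree‖ ≤ β x := by
    intro x
    rw [hψ' x, hfree']
    refine le_trans (ocChain_hybrid f (g x) (hglip x) ψ₀ T) ?_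
    rw [← Fin.sum_univ_eq_sum_range (fun t => ‖g x t (φ t) - f t (φ t)‖) T, hβ]
    exact le_of_eq (Finset.sum_congr rfl fun t _ => herr x t)
  have hunit : ∀ x, ‖ψ x‖ = 1 := fun x => by
    rw [hψ' x, ocChain_norm _ (hgnorm x), hψ₀]
  have hfreeunit : ‖ψfree‖ = 1 := by rw [hfree', ocChain_norm f hfnorm, hψ₀]
  -- fidelity vs distance
  have step2 : ∀ x, 1 - ‖(inner ℂ ψfree (ψ x) : ℂ)‖ ^ 2 ≤ ‖ψ x - ψfree‖ ^ 2 := by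
    intro x
    have hns := norm_sub_sq (𝕜 := ℂ) (ψ x) ψfree
    rw [hunit x, hfreeunit] at hns
    have habs : ‖(inner ℂ (ψ x) ψfree : ℂ)‖ = ‖(inner ℂ ψfree (ψ x) : ℂ)‖ := by
      rw [← inner_conj_symm ψfree (ψ x)]
      exact (Complex.norm_conj (inner ℂ (ψ x) ψfree : ℂ)).symm
    have hre : RCLike.re (inner ℂ (ψ x) ψfree : ℂ) ≤ ‖(inner ℂ ψfree (ψ x) : ℂ)‖ := by
      rw [← habs]
      exact (inner ℂ (ψ x) ψfree : ℂ).re_le_norm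
    nlinarith [sq_nonneg (1 - ‖(inner ℂ ψfree (ψ x) : ℂ)‖)]
  -- total query magnitude bound
  have step3 : ∀ t : Fin T, ∑ x : Fin N, α x t ≤ (k t : ℝ) := by
    intro t
    have hsum : ∀ x : Fin N, α x t = ∑ z : Fin M, if z ∈ S x t then ‖φ t z‖ ^ 2 else 0 := by
      intro x
      rw [hα]
      rw [Finset.sum_ite_mem, Finset.univ_inter]
    have hone : ∑ z : Fin M, ‖φ t z‖ ^ 2 = 1 := by
      have h1 := hφnorm t
      rw [EuclideanSpace.norm_eq] at h1
      have h2 : 0 ≤ ∑ z : Fin M, ‖φ t z‖ ^ 2 :=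
        Finset.sum_nonneg fun z _ => sq_nonneg _
      calc ∑ z : Fin M, ‖φ t z‖ ^ 2 = Real.sqrt (∑ z : Fin M, ‖φ t z‖ ^ 2) ^ 2 :=
            (Real.sq_sqrt h2).symm
        _ = 1 := by rw [h1]; norm_num
    calc ∑ x : Fin N, α x t
        = ∑ z : Fin M, ∑ x : Fin N, if z ∈ S x t then ‖φ t z‖ ^ 2 else 0 := by
          rw [Finset.sum_congr rfl fun x _ => hsum x, Finset.sum_comm]
      _ = ∑ z : Fin M, ((Finset.univ.filter fun x : Fin N => z ∈ S x t).card : ℝ)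
            * ‖φ t z‖ ^ 2 := by
          refine Finset.sum_congr rfl fun z _ => ?_
          rw [← Finset.sum_filter, Finset.sum_const, nsmul_eq_mul]
      _ ≤ ∑ z : Fin M, (k t : ℝ) * ‖φ t z‖ ^ 2 := by
          refine Finset.sum_le_sum fun z _ => ?_
          have : ((Finset.univ.filter fun x : Fin N => z ∈ S x t).card : ℝ) ≤ (k t : ℝ) := by
            exact_mod_cast hk t z
          exact mul_le_mul_of_nonneg_right this (sq_nonneg _)
      _ = (k t : ℝ) := by rw [← Finset.mul_sum, hone, mul_one]
  -- Cauchy–Schwarz over x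
  have hCS : ∀ t s : Fin T, ∑ x : Fin N, Real.sqrt (α x t) * Real.sqrt (α x s) ≤
      Real.sqrt (k t) * Real.sqrt (k s) := by
    intro t s
    have h1 : (∑ x : Fin N, Real.sqrt (α x t) * Real.sqrt (α x s)) ^ 2 ≤
        (∑ x : Fin N, α x t) * (∑ x : Fin N, α x s) := by
      have := Finset.sum_mul_sq_le_sq_mul_sq Finset.univ
        (fun x : Fin N => Real.sqrt (α x t)) (fun x : Fin N => Real.sqrt (α x s))
      simpa [Real.sq_sqrt (hα0 _ _)] using this
    have h2 : (0:ℝ) ≤ ∑ x : Fin N, Real.sqrt (α x t) * Real.sqrt (α x s) :=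
      Finset.sum_nonneg fun x _ => mul_nonneg (Real.sqrt_nonneg _) (Real.sqrt_nonneg _)
    have h3 : ∑ x : Fin N, Real.sqrt (α x t) * Real.sqrt (α x s) ≤
        Real.sqrt ((∑ x : Fin N, α x t) * (∑ x : Fin N, α x s)) := by
      rw [Real.le_sqrt h2]
      · exact h1
      · exact mul_nonneg (Finset.sum_nonneg fun x _ => hα0 x t)
          (Finset.sum_nonneg fun x _ => hα0 x s)
    refine h3.trans ?_
    rw [Real.sqrt_mul (Finset.sum_nonneg fun x _ => hα0 x t)]
    exact mul_le_mul (Real.sqrt_le_sqrt (step3 t)) (Real.sqrt_le_sqrt (step3 s))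
      (Real.sqrt_nonneg _) (Real.sqrt_nonneg _)
  have expand : ∀ x, β x ^ 2 = ∑ t : Fin T, ∑ s : Fin T,
      (2 * Real.sqrt (α x t)) * (2 * Real.sqrt (α x s)) := by
    intro x
    rw [hβ, pow_two, Finset.sum_mul_sum]
  calc ∑ x : Fin N, (1 - ‖(inner ℂ ψfree (ψ x) : ℂ)‖ ^ 2)
      ≤ ∑ x : Fin N, ‖ψ x - ψfree‖ ^ 2 := Finset.sum_le_sum fun x _ => step2 x
    _ ≤ ∑ x : Fin N, β x ^ 2 := by
        refine Finset.sum_le_sum fun x _ => ?_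
        have h1 := hdiff x
        have h0 : (0:ℝ) ≤ ‖ψ x - ψfree‖ := norm_nonneg _
        nlinarith
    _ = ∑ t : Fin T, ∑ s : Fin T, ∑ x : Fin N,
          (2 * Real.sqrt (α x t)) * (2 * Real.sqrt (α x s)) := by
        rw [Finset.sum_congr rfl fun x _ => expand x, Finset.sum_comm]
        exact Finset.sum_congr rfl fun t _ => Finset.sum_comm
    _ ≤ ∑ t : Fin T, ∑ s : Fin T, (2 * Real.sqrt (k t)) * (2 * Real.sqrt (k s)) := by
        refine Finset.sum_le_sum fun t _ => Finset.sum_le_sum fun s _ => ?_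
        calc ∑ x : Fin N, (2 * Real.sqrt (α x t)) * (2 * Real.sqrt (α x s))
            = 4 * ∑ x : Fin N, Real.sqrt (α x t) * Real.sqrt (α x s) := by
              rw [Finset.mul_sum]
              exact Finset.sum_congr rfl fun x _ => by ring
          _ ≤ 4 * (Real.sqrt (k t) * Real.sqrt (k s)) := by linarith [hCS t s]
          _ = (2 * Real.sqrt (k t)) * (2 * Real.sqrt (k s)) := by ring
    _ = 4 * (∑ t : Fin T, Real.sqrt (k t)) ^ 2 := by
        rw [pow_two, Finset.sum_mul_sum, Finset.mul_sum]
        refine Finset.sum_congr rfl fun t _ => ?_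
        rw [Finset.mul_sum]
        exact Finset.sum_congr rfl fun s _ => by ring
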